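/- For any two finite graphs G₁ and G₂ and any k ≥ 2, the multisets of stable k-WL colors over all k-tuples of G₁ and G₂ are equal if and only if the multisets of diagonal stable colors {{C_{k-WL}(v,...,v) : v ∈ V}} are equal for G₁ and G₂. -/
import Mathlib

/-- The "ordered isomorphism type" of a `k`-tuple: the equality pattern and the adjacency
pattern of its entries. Two tuples get the same initial color iff the ordered induced
subgraphs on them are isomorphic. -/
def kInit {V : Type} (G : SimpleGraph V) (k : ℕ) (t : Fin k → V) :
    (Fin k → Fin k → Prop) × (Fin k → Fin k → Prop) :=
  (fun i j => t i = t j, fun i j => G.Adj (t i) (t j))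

/-- Color type after `n` rounds of `k`-WL refinement. -/
def KWLType (k : ℕ) : ℕ → Type
  | 0 => (Fin k → Fin k → Prop) × (Fin k → Fin k → Prop)
  | n + 1 => KWLType k n × (Fin k → Multiset (KWLType k n))

/-- `n` rounds of `k`-WL refinement: `C'(s) = (C(s), M₁(s), …, M_k(s))` with
`M_j(s) = {{C(s[j := w]) : w ∈ V}}`, initialized with the ordered isomorphism type. -/
def kwl {V : Type} [Fintype V] (G : SimpleGraph V) (k : ℕ) :
    (n : ℕ) → (Fin k → V) → KWLType k n
  | 0 => kInit G k
  | n + 1 => fun t => (kwl G k n t,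
      fun j => Finset.univ.val.map (fun w => kwl G k n (Function.update t j w)))

namespace KWLAux

/-- second component of a refined color -/
def sndK {k n : ℕ} (c : KWLType k (n+1)) : Fin k → Multiset (KWLType k n) := c.2

/-- projection of a color to the initial round -/
def kbase (k : ℕ) : (n : ℕ) → KWLType k n → KWLType k 0
  | 0, c => c
  | n+1, c => kbase k n c.1

lemma kbase_kwl {V : Type} [Fintype V] (G : SimpleGraph V) (k : ℕ) :
    ∀ (n : ℕ) (t : Fin k → V), kbase k n (kwl G k n t) = kInit G k t
  | 0, t => rfl
  | n+1, t => kbase_kwl G k n t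

lemma sndK_kwl {V : Type} [Fintype V] (G : SimpleGraph V) (k n : ℕ) (t : Fin k → V) :
    sndK (kwl G k (n+1) t) =
      fun j => Finset.univ.val.map (fun w => kwl G k n (Function.update t j w)) := rfl

lemma bind_const {α β : Type*} (s : Multiset α) (m : Multiset β) :
    s.bind (fun _ => m) = Multiset.card s • m := by
  induction s using Multiset.induction_on with
  | empty => simp
  | cons a s ih =>
      rw [Multiset.cons_bind, ih, Multiset.card_cons, add_smul, one_smul, add_comm]

/-- extend a tuple of length `m` by one more value -/
def extTup {V : Type} (m : ℕ) (w : Fin m → V) (w' : V) : Fin (m+1) → V :=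
  fun i => if h : (i : ℕ) < m then w ⟨i, h⟩ else w'

def extEquiv {V : Type} (m : ℕ) : ((Fin m → V) × V) ≃ (Fin (m+1) → V) where
  toFun p := extTup m p.1 p.2
  invFun g := (fun i => g ⟨i, Nat.lt_succ_of_lt i.2⟩, g ⟨m, Nat.lt_succ_self m⟩)
  left_inv p := by
    refine Prod.ext ?_ ?_
    · funext i
      simp [extTup]
    · simp [extTup]
  right_inv g := by
    funext i
    simp only [extTup]
    split
    · congr 1
    · rename_i h
      congr 1
      have : (i : ℕ) = m := Nat.le_antisymm (Nat.lt_succ_iff.mp i.2) (Nat.le_of_not_lt h)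
      exact Fin.ext this.symm

lemma bind_univ_ext {V α : Type} [Fintype V] (m : ℕ) (F : (Fin (m+1) → V) → α) :
    (Finset.univ.val : Multiset (Fin m → V)).bind
      (fun w => (Finset.univ.val : Multiset V).map (fun w' => F (extTup m w w'))) =
    (Finset.univ.val : Multiset (Fin (m+1) → V)).map F := by
  have h1 : (Finset.univ : Finset (Fin (m+1) → V)) =
      Finset.map (extEquiv (V := V) m).toEmbedding Finset.univ :=
    (Finset.map_univ_equiv _).symm
  rw [h1, Finset.map_val, Multiset.map_map,
    show (Finset.univ : Finset ((Fin m → V) × V)) = Finset.univ ×ˢ Finset.univ from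
      Finset.univ_product_univ.symm,
    Finset.product_val,
    show ((Finset.univ.val : Multiset (Fin m → V)) ×ˢ (Finset.univ.val : Multiset V)) =
      (Finset.univ.val : Multiset (Fin m → V)).bind
        (fun a => (Finset.univ.val : Multiset V).map (Prod.mk a)) from rfl,
    Multiset.map_bind]
  apply Multiset.bind_congr
  intro w _
  rw [Multiset.map_map]
  rfl

/-- iterated bind along coordinates `0, 1, …` -/
def DIter {C : Type} (k : ℕ) (T : Fin k → C → Multiset C) (d : Multiset C) : ℕ → Multiset C
  | 0 => d
  | m+1 => if h : m < k then (DIter k T d m).bind (T ⟨m, h⟩) else DIter k T d m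

lemma update_ext {V : Type} (k m : ℕ) (h : m < k) (v w' : V) (w : Fin m → V) :
    Function.update (fun i : Fin k => if h' : (i : ℕ) < m then w ⟨i, h'⟩ else v)
        ⟨m, h⟩ w' =
    fun i : Fin k => if h' : (i : ℕ) < m + 1 then extTup m w w' ⟨i, h'⟩ else v := by
  funext i
  by_cases hi : i = (⟨m, h⟩ : Fin k)
  · subst hi
    rw [Function.update_self, dif_pos (Nat.lt_succ_self m)]
    simp only [extTup]
    rw [dif_neg (lt_irrefl m)]
  · rw [Function.update_of_ne hi]
    have him : (i : ℕ) ≠ m := fun e => hi (Fin.ext e)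
    by_cases h2 : (i : ℕ) < m
    · rw [dif_pos h2, dif_pos (Nat.lt_succ_of_lt h2)]
      simp only [extTup]
      rw [dif_pos h2]
    · rw [dif_neg h2, dif_neg (fun h3 => h2 (lt_of_le_of_ne (Nat.lt_succ_iff.mp h3) him))]

lemma DIter_eq {V C : Type} [Fintype V] (k : ℕ) (f : (Fin k → V) → C)
    (T : Fin k → C → Multiset C)
    (HT : ∀ (t : Fin k → V) (j : Fin k),
      T j (f t) = Finset.univ.val.map (fun w => f (Function.update t j w))) :
    ∀ (m : ℕ), m ≤ k →
    DIter k T (Finset.univ.val.map (fun v : V => f (fun _ => v))) m =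
      (Finset.univ.val : Multiset V).bind (fun v =>
        (Finset.univ.val : Multiset (Fin m → V)).map
          (fun w => f (fun i : Fin k => if h : (i : ℕ) < m then w ⟨i, h⟩ else v))) := by
  intro m
  induction m with
  | zero =>
    intro _
    simp only [DIter]
    have h0 : ∀ v : V, ((Finset.univ.val : Multiset (Fin 0 → V)).map
        (fun w => f (fun i : Fin k => if h : (i : ℕ) < 0 then w ⟨i, h⟩ else v))) =
        {f (fun _ => v)} := by
      intro v
      rw [Finset.univ_unique, Finset.singleton_val, Multiset.map_singleton]
      rfl
    rw [Multiset.bind_congr (fun v _ => h0 v), Multiset.bind_singleton]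
  | succ m ih =>
    intro hm
    have hmk : m < k := hm
    simp only [DIter, dif_pos hmk]
    rw [ih (le_of_lt hmk), Multiset.bind_assoc]
    apply Multiset.bind_congr
    intro v _
    rw [Multiset.bind_map]
    have step : ∀ w : Fin m → V,
        T ⟨m, hmk⟩ (f fun i : Fin k => if h : (i : ℕ) < m then w ⟨i, h⟩ else v) =
        (Finset.univ.val : Multiset V).map
          (fun w' => f (fun i : Fin k => if h : (i : ℕ) < m + 1 then extTup m w w' ⟨i, h⟩ else v)) := by
      intro w
      rw [HT]
      apply Multiset.map_congr rfl
      intro w' _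
      rw [update_ext k m hmk v w' w]
    rw [Multiset.bind_congr (fun w _ => step w)]
    exact bind_univ_ext m (fun g : Fin (m+1) → V => f (fun i : Fin k => if h : (i : ℕ) < m + 1 then g ⟨i, h⟩ else v))

section Joint

variable {V₁ V₂ : Type} [Fintype V₁] [Fintype V₂]
  (G₁ : SimpleGraph V₁) (G₂ : SimpleGraph V₂) (k N : ℕ)

open scoped Classical in
/-- joint refinement map on stable colors -/
noncomputable def Tj (j : Fin k) (c : KWLType k N) : Multiset (KWLType k N) :=
  if h : ∃ u : (Fin k → V₁) ⊕ (Fin k → V₂),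
      Sum.elim (kwl G₁ k N) (kwl G₂ k N) u = c
  then sndK (Sum.elim (kwl G₁ k (N+1)) (kwl G₂ k (N+1)) h.choose) j
  else 0

variable
    (hstab : ∀ u w : (Fin k → V₁) ⊕ (Fin k → V₂),
      Sum.elim (kwl G₁ k N) (kwl G₂ k N) u = Sum.elim (kwl G₁ k N) (kwl G₂ k N) w ↔
      Sum.elim (kwl G₁ k (N + 1)) (kwl G₂ k (N + 1)) u =
        Sum.elim (kwl G₁ k (N + 1)) (kwl G₂ k (N + 1)) w)

include hstab

lemma Tj_spec (u : (Fin k → V₁) ⊕ (Fin k → V₂)) (j : Fin k) :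
    Tj G₁ G₂ k N j (Sum.elim (kwl G₁ k N) (kwl G₂ k N) u) =
      sndK (Sum.elim (kwl G₁ k (N+1)) (kwl G₂ k (N+1)) u) j := by
  have hex : ∃ u' : (Fin k → V₁) ⊕ (Fin k → V₂),
      Sum.elim (kwl G₁ k N) (kwl G₂ k N) u' = Sum.elim (kwl G₁ k N) (kwl G₂ k N) u :=
    ⟨u, rfl⟩
  unfold Tj
  rw [dif_pos hex]
  have h2 := (hstab _ _).mp hex.choose_spec
  rw [h2]

lemma HT₁ (t : Fin k → V₁) (j : Fin k) :
    Tj G₁ G₂ k N j (kwl G₁ k N t) =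
      Finset.univ.val.map (fun w => kwl G₁ k N (Function.update t j w)) := by
  have := Tj_spec G₁ G₂ k N hstab (Sum.inl t) j
  simpa [sndK_kwl] using this

lemma HT₂ (t : Fin k → V₂) (j : Fin k) :
    Tj G₁ G₂ k N j (kwl G₂ k N t) =
      Finset.univ.val.map (fun w => kwl G₂ k N (Function.update t j w)) := by
  have := Tj_spec G₁ G₂ k N hstab (Sum.inr t) j
  simpa [sndK_kwl] using this

end Joint

lemma map_filter' {α β : Type*} (p : β → Prop) [DecidablePred p] (q : α → Prop) [DecidablePred q]
    (f : α → β) (s : Multiset α) (h : ∀ a, p (f a) ↔ q a) :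
    Multiset.filter p (s.map f) = (s.filter q).map f := by
  induction s using Multiset.induction_on with
  | empty => simp
  | cons a s ih =>
    by_cases hq : q a
    · rw [Multiset.map_cons, Multiset.filter_cons_of_pos _ ((h a).mpr hq),
        Multiset.filter_cons_of_pos _ hq, Multiset.map_cons, ih]
    · rw [Multiset.map_cons, Multiset.filter_cons_of_neg _ (fun hp => hq ((h a).mp hp)),
        Multiset.filter_cons_of_neg _ hq, ih]

lemma filter_diag {V : Type} [Fintype V] (G : SimpleGraph V) (k N : ℕ) (hk : 0 < k) :
    @Multiset.filter _ (fun c => ∀ i j : Fin k, (kbase k N c).1 i j)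
        (Classical.decPred _) (Finset.univ.val.map (kwl G k N)) =
      Finset.univ.val.map (fun v : V => kwl G k N (fun _ => v)) := by
  rw [@map_filter' _ _ _ (Classical.decPred _)
    (fun t : Fin k → V => ∀ i j, t i = t j) (Classical.decPred _) (kwl G k N) Finset.univ.val
    (fun t => by simp only [kbase_kwl]; exact Iff.rfl)]
  have h2 : @Multiset.filter _ (fun t : Fin k → V => ∀ i j, t i = t j) (Classical.decPred _)
        Finset.univ.val =
      Finset.univ.val.map (fun v : V => (fun _ : Fin k => v)) := by
    have hnd1 : (@Multiset.filter _ (fun t : Fin k → V => ∀ i j, t i = t j)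
        (Classical.decPred _) Finset.univ.val).Nodup :=
      @Multiset.Nodup.filter _ _ (Classical.decPred _) _ Finset.univ.nodup
    have hinj : Function.Injective (fun v : V => (fun _ : Fin k => v)) := by
      intro a b hab
      exact congrFun hab ⟨0, hk⟩
    have hnd2 : (Finset.univ.val.map (fun v : V => (fun _ : Fin k => v))).Nodup :=
      Multiset.Nodup.map hinj Finset.univ.nodup
    rw [Multiset.Nodup.ext hnd1 hnd2]
    intro t
    simp only [Multiset.mem_filter, Multiset.mem_map]
    constructor
    · rintro ⟨-, ht⟩
      exact ⟨t ⟨0, hk⟩, by simp, funext fun i => ht ⟨0, hk⟩ i⟩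
    · rintro ⟨v, -, rfl⟩
      exact ⟨by simp, fun i j => rfl⟩
  rw [h2, Multiset.map_map]
  rfl

end KWLAux

open KWLAux in
/-- For finite graphs `G₁, G₂` and `k ≥ 2`, once the `k`-WL coloring
has stabilized (iteration `N` induces the same partition of tuples as iteration `N+1`),
the multisets of stable colors over *all* `k`-tuples agree iff the multisets of stable
colors of the *diagonal* tuples `{{C(v,…,v) : v ∈ V}}` agree. -/
theorem kwl_full_multiset_eq_iff_diag_multiset_eq
    {V₁ V₂ : Type} [Fintype V₁] [Fintype V₂]
    (G₁ : SimpleGraph V₁) (G₂ : SimpleGraph V₂) (k : ℕ) (hk : 2 ≤ k) (N : ℕ)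
    (hstab : ∀ u w : (Fin k → V₁) ⊕ (Fin k → V₂),
      Sum.elim (kwl G₁ k N) (kwl G₂ k N) u = Sum.elim (kwl G₁ k N) (kwl G₂ k N) w ↔
      Sum.elim (kwl G₁ k (N + 1)) (kwl G₂ k (N + 1)) u =
        Sum.elim (kwl G₁ k (N + 1)) (kwl G₂ k (N + 1)) w) :
    (Finset.univ.val.map (kwl G₁ k N) = Finset.univ.val.map (kwl G₂ k N)) ↔
    (Finset.univ.val.map (fun v : V₁ => kwl G₁ k N (fun _ => v)) =
      Finset.univ.val.map (fun v : V₂ => kwl G₂ k N (fun _ => v))) := by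
  classical
  have hk0 : 0 < k := lt_of_lt_of_le two_pos hk
  constructor
  · intro hfull
    rw [← filter_diag G₁ k N hk0, ← filter_diag G₂ k N hk0, hfull]
  · intro hdiag
    have hcard : Fintype.card V₁ = Fintype.card V₂ := by
      have := congrArg Multiset.card hdiag
      simpa using this
    set T := Tj G₁ G₂ k N with hT
    have h1 := DIter_eq k (kwl G₁ k N) T (HT₁ G₁ G₂ k N hstab) k le_rfl
    have h2 := DIter_eq k (kwl G₂ k N) T (HT₂ G₁ G₂ k N hstab) k le_rfl
    have key : ∀ {V : Type} [inst : Fintype V] (f : (Fin k → V) → KWLType k N),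
        ((Finset.univ.val : Multiset V).bind (fun v =>
          (Finset.univ.val : Multiset (Fin k → V)).map
            (fun w => f (fun i : Fin k => if h : (i : ℕ) < k then w ⟨i, h⟩ else v)))) =
        Fintype.card V • ((Finset.univ.val : Multiset (Fin k → V)).map f) := by
      intro V inst f
      have e1 : ∀ v : V, ((Finset.univ.val : Multiset (Fin k → V)).map
          (fun w => f (fun i : Fin k => if h : (i : ℕ) < k then w ⟨i, h⟩ else v))) =
          (Finset.univ.val : Multiset (Fin k → V)).map f := by
        intro v
        apply Multiset.map_congr rfl
        intro w _
        congr 1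
        funext i
        rw [dif_pos i.2]
      rw [Multiset.bind_congr (fun v _ => e1 v), bind_const]
      congr 1
    rw [key] at h1 h2
    have hsm : Fintype.card V₁ • (Finset.univ.val.map (kwl G₁ k N)) =
        Fintype.card V₁ • (Finset.univ.val.map (kwl G₂ k N)) := by
      calc Fintype.card V₁ • (Finset.univ.val.map (kwl G₁ k N))
          = DIter k T (Finset.univ.val.map (fun v : V₁ => kwl G₁ k N (fun _ => v))) k :=
            h1.symm
        _ = DIter k T (Finset.univ.val.map (fun v : V₂ => kwl G₂ k N (fun _ => v))) k := by
            rw [hdiag]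
        _ = Fintype.card V₂ • (Finset.univ.val.map (kwl G₂ k N)) := h2
        _ = Fintype.card V₁ • (Finset.univ.val.map (kwl G₂ k N)) := by rw [hcard]
    rcases Nat.eq_zero_or_pos (Fintype.card V₁) with h0 | hpos
    · haveI hE1 : IsEmpty V₁ := Fintype.card_eq_zero_iff.mp h0
      haveI hE2 : IsEmpty V₂ := Fintype.card_eq_zero_iff.mp (hcard ▸ h0)
      have z1 : (Finset.univ.val.map (kwl G₁ k N)) = 0 := by
        apply Multiset.eq_zero_of_forall_notMem
        intro c hc
        rcases Multiset.mem_map.mp hc with ⟨t, -, -⟩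
        exact IsEmpty.false (t ⟨0, hk0⟩)
      have z2 : (Finset.univ.val.map (kwl G₂ k N)) = 0 := by
        apply Multiset.eq_zero_of_forall_notMem
        intro c hc
        rcases Multiset.mem_map.mp hc with ⟨t, -, -⟩
        exact IsEmpty.false (t ⟨0, hk0⟩)
      rw [z1, z2]
    · rw [Multiset.ext]
      intro c
      have := congrArg (Multiset.count c) hsm
      rw [Multiset.count_nsmul, Multiset.count_nsmul] at this
      exact Nat.eq_of_mul_eq_mul_left hpos this
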